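/- Let u_t be a one-parameter family in a group satisfying the σ-cocycle identity u_{s+t} = u_s · σ_s(u_t) for a one-parameter group of automorphisms σ, and suppose for all t one has the identity Δ(u_t)·(τ_t ⊗ σ_t)(Ω*) = Ω*·(v_t ⊗ u_t) for elements v_t, where Δ is multiplicative, τ is a one-parameter automorphism group commuting appropriately, Ω is unitary, and (τ_t ⊗ σ_t) are automorphisms of the tensor product with (τ_{s+t} ⊗ σ_{s+t}) = (τ_s ⊗ σ_s)(τ_t ⊗ σ_t). Then v_t satisfies the τ-cocycle identity v_{s+t} = v_s · τ_s(v_t). -/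
import Mathlib


open TensorProduct

lemma tmul_one_inj_aux (M : Type*) [Ring M] [Algebra ℂ M] [Nontrivial M]
    {x y : M} (h : x ⊗ₜ[ℂ] (1 : M) = y ⊗ₜ[ℂ] (1 : M)) : x = y := by
  have halg : Function.Injective (Algebra.linearMap ℂ M) := by
    simpa [Algebra.linearMap] using (algebraMap ℂ M).injective
  have hinj : Function.Injective (LinearMap.lTensor M (Algebra.linearMap ℂ M)) :=
    Module.Flat.lTensor_preserves_injective_linearMap _ halg
  have h1 : (LinearMap.lTensor M (Algebra.linearMap ℂ M)) (x ⊗ₜ[ℂ] (1 : ℂ))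
      = (LinearMap.lTensor M (Algebra.linearMap ℂ M)) (y ⊗ₜ[ℂ] (1 : ℂ)) := by
    simpa using h
  have h2 := hinj h1
  have h3 := congrArg (TensorProduct.rid ℂ M) h2
  simpa using h3

/-- Suppose `u_{s+t} = u_s σ_s(u_t)` (a `σ`-cocycle of unitaries),
`Δ(u_t)·(τ_t ⊗ σ_t)(Ω*) = Ω*·(v_t ⊗ u_t)` for all `t`, where `Δ` is multiplicative,
`Δ ∘ σ_s = (τ_s ⊗ σ_s) ∘ Δ`, and `Ω*` is unitary (invertible).  Then `v` satisfies the
`τ`-cocycle identity `v_{s+t} = v_s τ_s(v_t)`. -/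
theorem v_is_tau_cocycle (M : Type*) [Ring M] [Algebra ℂ M] [Nontrivial M]
    (Δ : M →ₐ[ℂ] M ⊗[ℂ] M)
    (σ τ : ℝ → (M ≃ₐ[ℂ] M))
    (hσgrp : ∀ s t : ℝ, ∀ x : M, σ (s + t) x = σ s (σ t x))
    (hτgrp : ∀ s t : ℝ, ∀ x : M, τ (s + t) x = τ s (τ t x))
    (Ωs Ωsinv : M ⊗[ℂ] M) (hΩ : Ωs * Ωsinv = 1) (hΩ' : Ωsinv * Ωs = 1)
    (u v : ℝ → M)
    (hu_unit : ∀ t, IsUnit (u t)) (hv_unit : ∀ t, IsUnit (v t))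
    (hu : ∀ s t : ℝ, u (s + t) = u s * σ s (u t))
    (hΔσ : ∀ (s : ℝ) (x : M),
      Δ (σ s x) = (Algebra.TensorProduct.map (τ s).toAlgHom (σ s).toAlgHom) (Δ x))
    (hmain : ∀ t : ℝ,
      Δ (u t) * (Algebra.TensorProduct.map (τ t).toAlgHom (σ t).toAlgHom) Ωs
        = Ωs * ((v t) ⊗ₜ[ℂ] (u t))) :
    ∀ s t : ℝ, v (s + t) = v s * τ s (v t) := by
  intro s t
  set F : ℝ → (M ⊗[ℂ] M →ₐ[ℂ] M ⊗[ℂ] M) :=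
    fun r => Algebra.TensorProduct.map (τ r).toAlgHom (σ r).toAlgHom with hF
  have hFgrp : ∀ x : M ⊗[ℂ] M, F (s + t) x = F s (F t x) := by
    intro x
    induction x using TensorProduct.induction_on with
    | zero => simp
    | tmul a b => simp [hF, hτgrp, hσgrp]
    | add a b ha hb => simp [map_add, ha, hb]
  -- main computation
  have key : Ωs * ((v (s + t)) ⊗ₜ[ℂ] (u (s + t)))
      = Ωs * ((v s * τ s (v t)) ⊗ₜ[ℂ] (u (s + t))) := by
    have h1 : Δ (u (s + t)) * F (s + t) Ωs
        = Ωs * ((v s * τ s (v t)) ⊗ₜ[ℂ] (u (s + t))) := by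
      calc Δ (u (s + t)) * F (s + t) Ωs
          = Δ (u s) * (F s (Δ (u t)) * F s (F t Ωs)) := by
            rw [hu, map_mul, hΔσ, hFgrp, mul_assoc]
        _ = Δ (u s) * F s (Δ (u t) * F t Ωs) := by rw [map_mul]
        _ = Δ (u s) * F s (Ωs * ((v t) ⊗ₜ[ℂ] (u t))) := by rw [hmain]
        _ = Δ (u s) * F s Ωs * ((τ s (v t)) ⊗ₜ[ℂ] (σ s (u t))) := by
            rw [map_mul, ← mul_assoc]
            simp [hF, Algebra.TensorProduct.map_tmul]
        _ = Ωs * ((v s) ⊗ₜ[ℂ] (u s)) * ((τ s (v t)) ⊗ₜ[ℂ] (σ s (u t))) := by rw [hmain]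
        _ = Ωs * ((v s * τ s (v t)) ⊗ₜ[ℂ] (u (s + t))) := by
            rw [mul_assoc, Algebra.TensorProduct.tmul_mul_tmul, hu]
    rw [← h1, hmain]
  have hcancel : (v (s + t)) ⊗ₜ[ℂ] (u (s + t)) = (v s * τ s (v t)) ⊗ₜ[ℂ] (u (s + t)) := by
    have := congrArg (fun z => Ωsinv * z) key
    simpa [← mul_assoc, hΩ'] using this
  -- kill the u factor
  obtain ⟨U, hU⟩ := hu_unit (s + t)
  have h2 : (v (s + t)) ⊗ₜ[ℂ] (1 : M) = (v s * τ s (v t)) ⊗ₜ[ℂ] (1 : M) := by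
    have := congrArg (fun z => z * ((1 : M) ⊗ₜ[ℂ] ((U⁻¹ : Mˣ) : M))) hcancel
    simpa [Algebra.TensorProduct.tmul_mul_tmul, ← hU, Units.mul_inv] using this
  exact tmul_one_inj_aux M h2
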